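/- arXiv:2301.04749 — 3 statements merged into one kernel-verified Lean document; each statement's English description precedes it below -/
import Mathlib

section
/- Let w be a weight on the unit disk 𝔻, and suppose there exist constants 0 < δ < 1 and m > 0 such that w(z) ≥ m whenever δ ≤ |z| < 1. Then with C_w := 1 + 4(∫_{|z|≤δ} w dσ)/(m(1-δ)²), every function f holomorphic on 𝔻 satisfies ∫_𝔻 |f|² w dσ ≤ C_w ∫_{δ<|z|<1} |f|² w dσ. -/
open Complex MeasureTheory Metric intervalIntegral

lemma circle_submean {f : ℂ → ℂ} {c : ℂ} {t : ℝ} (ht : 0 < t)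
    (hd : DiffContOnCl ℂ f (ball c t)) :
    2 * Real.pi * ‖f c‖ ≤ ∫ θ in (0:ℝ)..(2*Real.pi), ‖f (circleMap c t θ)‖ := by
  have hc : c ∈ ball c t := by simp [ht]
  have h1 := hd.circleIntegral_sub_inv_smul hc
  have h2 : (∮ z in C(c, t), (z - c)⁻¹ • f z)
      = Complex.I • ∫ θ in (0:ℝ)..(2*Real.pi), f (circleMap c t θ) := by
    rw [circleIntegral, ← intervalIntegral.integral_smul]
    refine intervalIntegral.integral_congr fun θ _ => ?_
    have hne : circleMap 0 t θ ≠ 0 := by simpa using circleMap_ne_center (c := (0:ℂ)) ht.ne' (θ := θ)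
    simp only [deriv_circleMap, circleMap_sub_center, smul_eq_mul]
    field_simp
  rw [h2] at h1
  have h3 : ‖Complex.I • ∫ θ in (0:ℝ)..(2*Real.pi), f (circleMap c t θ)‖
      = ‖∫ θ in (0:ℝ)..(2*Real.pi), f (circleMap c t θ)‖ := by
    rw [norm_smul]; simp
  have h4 : ‖((2 * Real.pi * Complex.I : ℂ)) • f c‖ = 2 * Real.pi * ‖f c‖ := by
    rw [norm_smul]
    simp [Real.pi_pos.le, mul_nonneg]
  calc 2 * Real.pi * ‖f c‖ = ‖Complex.I • ∫ θ in (0:ℝ)..(2*Real.pi), f (circleMap c t θ)‖ := by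
        rw [h1, h4]
      _ = ‖∫ θ in (0:ℝ)..(2*Real.pi), f (circleMap c t θ)‖ := h3
      _ ≤ ∫ θ in (0:ℝ)..(2*Real.pi), ‖f (circleMap c t θ)‖ :=
        intervalIntegral.norm_integral_le_integral_norm (by positivity)

lemma hsymm_circleMap (p : ℝ × ℝ) :
    Complex.polarCoord.symm p = circleMap 0 p.1 p.2 := by
  simp [Complex.polarCoord_symm_apply, circleMap, Complex.exp_mul_I]

lemma continuous_G : Continuous (fun p : ℝ × ℝ => circleMap 0 p.1 p.2) := by
  simp only [circleMap, zero_add]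
  fun_prop

lemma area_submean {f : ℂ → ℂ} {c : ℂ} {s : ℝ} (hs : 0 < s)
    (hsub : closedBall c s ⊆ ball (0:ℂ) 1) (hf : DifferentiableOn ℂ f (ball (0:ℂ) 1)) :
    Real.pi * s ^ 2 * ‖f c‖ ^ 2 ≤ ∫ z in ball c s, ‖f z‖ ^ 2 := by
  set π := Real.pi
  have hπ := Real.pi_pos
  -- the integrand in polar coordinates
  set G : ℝ × ℝ → ℝ := fun p => p.1 * ‖f (c + circleMap 0 p.1 p.2)‖ ^ 2 with hG
  -- continuity of f near relevant points
  have hfc : ContinuousOn f (ball (0:ℂ) 1) := hf.continuousOn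
  have hGcont : ContinuousOn G (Set.Icc 0 s ×ˢ Set.Icc (-π) π) := by
    apply ContinuousOn.mul (continuous_fst.continuousOn)
    apply ContinuousOn.pow
    apply ContinuousOn.norm
    apply hfc.comp (Continuous.continuousOn (continuous_const.add continuous_G))
    rintro ⟨t, θ⟩ ⟨ht, _⟩
    apply hsub
    simp only [Metric.mem_closedBall, dist_eq_norm, add_sub_cancel_left]
    simpa [norm_circleMap_zero, _root_.abs_of_nonneg ht.1] using ht.2
  have hGint : IntegrableOn G (Set.Ioo 0 s ×ˢ Set.Ioo (-π) π) := by
    apply (hGcont.integrableOn_compact (isCompact_Icc.prod isCompact_Icc)).mono_set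
    exact Set.prod_mono Set.Ioo_subset_Icc_self Set.Ioo_subset_Icc_self
  -- Step A: translate
  have stepA : ∫ z in ball c s, ‖f z‖ ^ 2 = ∫ z in ball (0:ℂ) s, ‖f (c + z)‖ ^ 2 := by
    rw [← MeasureTheory.integral_indicator measurableSet_ball, ← MeasureTheory.integral_indicator measurableSet_ball,
      ← integral_add_left_eq_self (μ := volume)
        (Set.indicator (ball c s) (fun z => ‖f z‖ ^ 2)) c]
    congr 1
    ext z
    by_cases hz : z ∈ ball (0:ℂ) s
    · rw [Set.indicator_of_mem hz, Set.indicator_of_mem (by simpa [mem_ball_iff_norm] using hz)]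
    · rw [Set.indicator_of_notMem hz, Set.indicator_of_notMem (by simpa [mem_ball_iff_norm] using hz)]
  -- Step B: polar coordinates
  have stepB : ∫ z in ball (0:ℂ) s, ‖f (c + z)‖ ^ 2
      = ∫ p in Set.Ioo 0 s ×ˢ Set.Ioo (-π) π, G p := by
    have hmeas : MeasurableSet {p : ℝ × ℝ | p.1 < s} :=
      measurableSet_Iio.preimage measurable_fst
    have hset : (Set.Ioi (0:ℝ) ×ˢ Set.Ioo (-π) π) ∩ {p : ℝ × ℝ | p.1 < s}
        = Set.Ioo 0 s ×ˢ Set.Ioo (-π) π := by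
      ext ⟨a, b⟩
      simp only [Set.mem_inter_iff, Set.mem_prod, Set.mem_Ioi, Set.mem_Ioo, Set.mem_setOf_eq]
      tauto
    rw [← MeasureTheory.integral_indicator measurableSet_ball,
      ← Complex.integral_comp_polarCoord_symm
        (Set.indicator (ball (0:ℂ) s) (fun z => ‖f (c + z)‖ ^ 2))]
    calc ∫ p in polarCoord.target,
          p.1 • (ball (0:ℂ) s).indicator (fun z => ‖f (c + z)‖ ^ 2) (Complex.polarCoord.symm p)
        = ∫ p in polarCoord.target, ({p : ℝ × ℝ | p.1 < s}).indicator G p := by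
          apply setIntegral_congr_fun (measurableSet_Ioi.prod measurableSet_Ioo)
          rintro ⟨t, θ⟩ ⟨ht, _⟩
          have ht0 : (0:ℝ) < t := ht
          have habs : circleMap 0 t θ ∈ ball (0:ℂ) s ↔ t < s := by
            simp [mem_ball_zero_iff, norm_circleMap_zero, _root_.abs_of_pos ht0]
          simp only [Set.indicator_apply, Set.mem_setOf_eq, hsymm_circleMap, smul_eq_mul, hG]
          by_cases hts : t < s
          · rw [if_pos hts, Set.indicator_of_mem (habs.mpr hts)]
          · rw [if_neg hts, Set.indicator_of_notMem (fun h => hts (habs.mp h)), mul_zero]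
      _ = ∫ p in polarCoord.target ∩ {p : ℝ × ℝ | p.1 < s}, G p := setIntegral_indicator hmeas
      _ = ∫ p in Set.Ioo 0 s ×ˢ Set.Ioo (-π) π, G p := by
          rw [show polarCoord.target = Set.Ioi (0:ℝ) ×ˢ Set.Ioo (-π) π from rfl, hset]
  -- Step D: Fubini
  have stepD : ∫ p in Set.Ioo 0 s ×ˢ Set.Ioo (-π) π, G p
      = ∫ t in Set.Ioo 0 s, ∫ θ in Set.Ioo (-π) π, G (t, θ) := by
    rw [Measure.volume_eq_prod]
    exact setIntegral_prod G (by rwa [← Measure.volume_eq_prod])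
  -- Step E
  have stepE : ∀ t ∈ Set.Ioo (0:ℝ) s,
      2 * π * ‖f c‖ ^ 2 * t ≤ ∫ θ in Set.Ioo (-π) π, G (t, θ) := by
    intro t ht
    have ht0 := ht.1
    have hcb : closedBall c t ⊆ ball (0:ℂ) 1 :=
      (closedBall_subset_closedBall ht.2.le).trans hsub
    have hd2 : DiffContOnCl ℂ (fun z => f z ^ 2) (ball c t) := by
      refine ⟨(hf.mono (ball_subset_closedBall.trans hcb)).pow 2, ?_⟩
      rw [closure_ball c ht0.ne']
      exact (hfc.mono hcb).pow 2
    have h1 := circle_submean ht0 hd2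
    have hper : Function.Periodic (fun θ => ‖f (circleMap c t θ) ^ 2‖) (2 * π) :=
      fun θ => by simp only [show circleMap c t (θ + 2 * π) = circleMap c t θ from periodic_circleMap c t θ]
    have h2 : (∫ θ in (0:ℝ)..2 * π, ‖f (circleMap c t θ) ^ 2‖)
        = ∫ θ in (-π)..π, ‖f (circleMap c t θ) ^ 2‖ := by
      have h3 := hper.intervalIntegral_add_eq 0 (-π)
      simp only [zero_add] at h3
      rw [h3]
      have hππ : -π + 2 * π = π := by ring
      rw [hππ]
    have h4 : (∫ θ in (-π)..π, ‖f (circleMap c t θ) ^ 2‖)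
        = ∫ θ in Set.Ioo (-π) π, ‖f (circleMap c t θ)‖ ^ 2 := by
      rw [intervalIntegral.integral_of_le (by linarith : -π ≤ π),
        setIntegral_congr_set Ioo_ae_eq_Ioc.symm]
      simp [norm_pow]
    have h5 : (∫ θ in Set.Ioo (-π) π, G (t, θ))
        = t * ∫ θ in Set.Ioo (-π) π, ‖f (circleMap c t θ)‖ ^ 2 := by
      rw [← MeasureTheory.integral_const_mul]
      apply setIntegral_congr_fun measurableSet_Ioo
      intro θ _
      simp only [hG]
      congr 2
      simp [circleMap]
    have h6 : ‖f c ^ 2‖ = ‖f c‖ ^ 2 := by rw [norm_pow]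
    rw [h6, h2, h4] at h1
    rw [h5]
    calc 2 * π * ‖f c‖ ^ 2 * t = t * (2 * π * ‖f c‖ ^ 2) := by ring
      _ ≤ t * ∫ θ in Set.Ioo (-π) π, ‖f (circleMap c t θ)‖ ^ 2 := by
          apply mul_le_mul_of_nonneg_left h1 ht0.le
  -- Step F
  have hRI : IntegrableOn (fun t => ∫ θ in Set.Ioo (-π) π, G (t, θ)) (Set.Ioo 0 s) := by
    have h : Integrable G (((volume : Measure ℝ).restrict (Set.Ioo 0 s)).prod
        ((volume : Measure ℝ).restrict (Set.Ioo (-π) π))) := by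
      rw [Measure.prod_restrict, ← Measure.volume_eq_prod]
      exact hGint
    exact h.integral_prod_left
  have hLI : IntegrableOn (fun t => 2 * π * ‖f c‖ ^ 2 * t) (Set.Ioo 0 s) := by
    apply ((continuous_const.mul continuous_id).continuousOn.integrableOn_compact
      isCompact_Icc).mono_set Set.Ioo_subset_Icc_self
  have hL : (∫ t in Set.Ioo (0:ℝ) s, 2 * π * ‖f c‖ ^ 2 * t) = π * s ^ 2 * ‖f c‖ ^ 2 := by
    rw [MeasureTheory.integral_const_mul,
      setIntegral_congr_set Ioo_ae_eq_Ioc,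
      ← intervalIntegral.integral_of_le hs.le, integral_id]
    ring
  calc π * s ^ 2 * ‖f c‖ ^ 2 = ∫ t in Set.Ioo (0:ℝ) s, 2 * π * ‖f c‖ ^ 2 * t := hL.symm
    _ ≤ ∫ t in Set.Ioo (0:ℝ) s, ∫ θ in Set.Ioo (-π) π, G (t, θ) :=
        setIntegral_mono_on hLI hRI measurableSet_Ioo stepE
    _ = ∫ z in ball c s, ‖f z‖ ^ 2 := by rw [← stepD, ← stepB, ← stepA]

theorem stmt4 (w : ℂ → ℝ) (hw0 : ∀ z, 0 ≤ w z) (hwmeas : Measurable w)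
    (hwint : IntegrableOn w (ball (0:ℂ) 1))
    (δ m : ℝ) (hδ0 : 0 < δ) (hδ1 : δ < 1) (hm : 0 < m)
    (hlow : ∀ z : ℂ, δ ≤ ‖z‖ → ‖z‖ < 1 → m ≤ w z)
    (f : ℂ → ℂ) (hf : DifferentiableOn ℂ f (ball (0:ℂ) 1)) :
    (1 / Real.pi) * (∫ z in ball (0:ℂ) 1, ‖f z‖ ^ 2 * w z) ≤
      (1 + 4 * ((1 / Real.pi) * ∫ z in {z : ℂ | ‖z‖ ≤ δ}, w z) / (m * (1 - δ) ^ 2)) *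
        ((1 / Real.pi) *
          ∫ z in {z : ℂ | δ < ‖z‖ ∧ ‖z‖ < 1},
            ‖f z‖ ^ 2 * w z) := by
  have hπ := Real.pi_pos
  set K : Set ℂ := {z : ℂ | ‖z‖ ≤ δ} with hKdef
  set A : Set ℂ := {z : ℂ | δ < ‖z‖ ∧ ‖z‖ < 1} with hAdef
  have hK : K = closedBall 0 δ := by
    ext z; simp [hKdef, mem_closedBall_zero_iff]
  have hA : A = ball 0 1 \ closedBall 0 δ := by
    ext z
    simp only [hAdef, Set.mem_setOf_eq, Set.mem_diff, mem_ball_zero_iff,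
      mem_closedBall_zero_iff, not_le]
    tauto
  have hKm : MeasurableSet K := hK ▸ measurableSet_closedBall
  have hAm : MeasurableSet A := hA ▸ (measurableSet_ball.diff measurableSet_closedBall)
  have hKsub : K ⊆ ball 0 1 := by rw [hK]; exact closedBall_subset_ball hδ1
  have hAsub : A ⊆ ball 0 1 := by rw [hA]; exact Set.diff_subset
  set g : ℂ → ℝ := fun z => ‖f z‖ ^ 2 * w z with hg
  have hgnn : ∀ z, 0 ≤ g z := fun z => mul_nonneg (by positivity) (hw0 z)
  have hIA : 0 ≤ ∫ z in A, g z := setIntegral_nonneg hAm (fun z _ => hgnn z)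
  have hW : 0 ≤ ∫ z in K, w z := setIntegral_nonneg hKm (fun z _ => hw0 z)
  by_cases hint : IntegrableOn g (ball (0:ℂ) 1)
  swap
  · rw [MeasureTheory.integral_undef hint, mul_zero]
    have h1 : 0 ≤ 4 * ((1 / Real.pi) * ∫ z in K, w z) / (m * (1 - δ) ^ 2) := by positivity
    have h2 : 0 ≤ (1 / Real.pi) * ∫ z in A, g z := by positivity
    nlinarith
  -- split the integral
  have hsplit : ∫ z in ball (0:ℂ) 1, g z = (∫ z in K, g z) + ∫ z in A, g z := by
    rw [hK, hA, ← setIntegral_union disjoint_sdiff_self_right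
      (measurableSet_ball.diff measurableSet_closedBall)
      (hint.mono_set (hK ▸ hKsub)) (hint.mono_set (hA ▸ hAsub)),
      Set.union_diff_cancel (closedBall_subset_ball hδ1)]
  set r : ℝ := (1 + δ) / 2 with hrdef
  set ρ : ℝ := (1 - δ) / 2 with hρdef
  have hr0 : 0 < r := by rw [hrdef]; linarith
  have hr1 : r < 1 := by rw [hrdef]; linarith
  have hρ0 : 0 < ρ := by rw [hρdef]; linarith
  have hrρ : r + ρ = 1 := by rw [hrdef, hρdef]; ring
  have hrρ' : r - ρ = δ := by rw [hrdef, hρdef]; ring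
  have hfc : ContinuousOn f (ball (0:ℂ) 1) := hf.continuousOn
  -- maximum on the sphere of radius r
  obtain ⟨z₀, hz₀s, hz₀max⟩ : ∃ z₀ ∈ sphere (0:ℂ) r, ∀ z ∈ sphere (0:ℂ) r, ‖f z‖ ≤ ‖f z₀‖ := by
    obtain ⟨z₀, hz₀, hmax⟩ := (isCompact_sphere (0:ℂ) r).exists_isMaxOn
      (NormedSpace.sphere_nonempty.mpr hr0.le)
      ((hfc.mono (fun z hz => by
        rw [mem_sphere_zero_iff_norm] at hz
        rw [mem_ball_zero_iff, hz]; exact hr1)).norm)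
    exact ⟨z₀, hz₀, fun z hz => hmax hz⟩
  have hz₀n : ‖z₀‖ = r := mem_sphere_zero_iff_norm.mp hz₀s
  set M : ℝ := ‖f z₀‖ with hM
  have hM0 : 0 ≤ M := norm_nonneg _
  have hmax : ∀ z ∈ closedBall (0:ℂ) r, ‖f z‖ ≤ M := by
    intro z hz
    have hdiff : DiffContOnCl ℂ f (ball (0:ℂ) r) := by
      refine ⟨hf.mono (ball_subset_ball hr1.le), ?_⟩
      rw [closure_ball _ hr0.ne']
      exact hfc.mono (closedBall_subset_ball hr1)
    apply Complex.norm_le_of_forall_mem_frontier_norm_le isBounded_ball hdiff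
    · intro x hx
      rw [frontier_ball _ hr0.ne'] at hx
      exact hz₀max x hx
    · rwa [closure_ball _ hr0.ne']
  -- bound I_K
  have hIK : ∫ z in K, g z ≤ M ^ 2 * ∫ z in K, w z := by
    rw [← MeasureTheory.integral_const_mul]
    apply setIntegral_mono_on (hint.mono_set hKsub)
      ((hwint.mono_set hKsub).const_mul _) hKm
    intro z hz
    have hzr : z ∈ closedBall (0:ℂ) r := by
      rw [mem_closedBall_zero_iff]
      rw [hK, mem_closedBall_zero_iff] at hz
      linarith
    have h1 : ‖f z‖ ≤ M := by
      have := hmax z hzr; exact this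
    have h2 : ‖f z‖ ^ 2 ≤ M ^ 2 :=
      pow_le_pow_left₀ (norm_nonneg _) h1 2
    exact mul_le_mul_of_nonneg_right h2 (hw0 z)
  -- submean bound for every ρ' < ρ
  have key : ∀ ρ' ∈ Set.Ioo (0:ℝ) ρ, Real.pi * ρ' ^ 2 * M ^ 2 * m ≤ ∫ z in A, g z := by
    intro ρ' hρ'
    have hsub2 : closedBall z₀ ρ' ⊆ ball (0:ℂ) 1 := by
      intro z hz
      rw [mem_closedBall_iff_norm] at hz
      rw [mem_ball_zero_iff]
      calc ‖z‖ = ‖z₀ + (z - z₀)‖ := by ring_nf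
        _ ≤ ‖z₀‖ + ‖z - z₀‖ := norm_add_le _ _
        _ ≤ r + ρ' := by rw [hz₀n]; linarith
        _ < r + ρ := by linarith [hρ'.2]
        _ = 1 := hrρ
    have hballA : ball z₀ ρ' ⊆ A := by
      intro z hz
      rw [mem_ball_iff_norm] at hz
      have hlo : r - ρ' ≤ ‖z‖ := by
        have := norm_sub_norm_le z₀ z
        rw [norm_sub_rev] at this
        calc r - ρ' ≤ ‖z₀‖ - ‖z - z₀‖ := by rw [hz₀n]; linarith
          _ ≤ ‖z‖ := by linarith
      have hhi : ‖z‖ < 1 := by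
        calc ‖z‖ = ‖z₀ + (z - z₀)‖ := by ring_nf
          _ ≤ ‖z₀‖ + ‖z - z₀‖ := norm_add_le _ _
          _ < r + ρ' := by rw [hz₀n]; linarith
          _ < r + ρ := by linarith [hρ'.2]
          _ = 1 := hrρ
      rw [hAdef]
      constructor
      · calc δ = r - ρ := hrρ'.symm
          _ < r - ρ' := by linarith [hρ'.2]
          _ ≤ ‖z‖ := hlo
      · exact hhi
    have h1 := area_submean hρ'.1 hsub2 hf
    have hfint : IntegrableOn (fun z => ‖f z‖ ^ 2) (ball z₀ ρ') := by
      apply (((hfc.mono hsub2).norm.pow 2).integrableOn_compact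
        (isCompact_closedBall _ _)).mono_set ball_subset_closedBall
    have h2 : (∫ z in ball z₀ ρ', ‖f z‖ ^ 2) * m ≤ ∫ z in ball z₀ ρ', g z := by
      rw [← MeasureTheory.integral_mul_const]
      apply setIntegral_mono_on (hfint.mul_const m)
        (hint.mono_set ((hballA.trans hAsub))) measurableSet_ball
      intro z hz
      have hzA := hballA hz
      rw [hAdef] at hzA
      have hwz : m ≤ w z := hlow z hzA.1.le hzA.2
      show ‖f z‖ ^ 2 * m ≤ ‖f z‖ ^ 2 * w z
      exact mul_le_mul_of_nonneg_left hwz (by positivity)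
    have h3 : ∫ z in ball z₀ ρ', g z ≤ ∫ z in A, g z := by
      apply setIntegral_mono_set (hint.mono_set hAsub)
        (Filter.Eventually.of_forall hgnn) (HasSubset.Subset.eventuallyLE hballA)
    calc Real.pi * ρ' ^ 2 * M ^ 2 * m = (Real.pi * ρ' ^ 2 * ‖f z₀‖ ^ 2) * m := by rw [hM]
      _ ≤ (∫ z in ball z₀ ρ', ‖f z‖ ^ 2) * m := mul_le_mul_of_nonneg_right h1 hm.le
      _ ≤ ∫ z in ball z₀ ρ', g z := h2
      _ ≤ ∫ z in A, g z := h3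
  -- pass to the limit ρ' → ρ
  have hlim : Real.pi * ρ ^ 2 * M ^ 2 * m ≤ ∫ z in A, g z := by
    have hcont : Filter.Tendsto (fun x : ℝ => Real.pi * x ^ 2 * M ^ 2 * m)
        (nhdsWithin ρ (Set.Iio ρ)) (nhds (Real.pi * ρ ^ 2 * M ^ 2 * m)) :=
      ((continuous_const.mul (continuous_pow 2)).mul continuous_const |>.mul
        continuous_const).tendsto ρ |>.mono_left nhdsWithin_le_nhds
    apply le_of_tendsto hcont
    filter_upwards [Ioo_mem_nhdsLT_of_mem (Set.right_mem_Ioc.mpr hρ0)] with x hx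
    exact key x hx
  -- final algebra
  rw [hsplit]
  set IK : ℝ := ∫ z in K, g z with hIKdef
  set IA : ℝ := ∫ z in A, g z with hIAdef
  set W : ℝ := ∫ z in K, w z with hWdef
  have hfinal : IK * (Real.pi * m * (1 - δ) ^ 2) ≤ 4 * W * IA := by
    have e1 : Real.pi * ρ ^ 2 * M ^ 2 * m = Real.pi * m * (1 - δ) ^ 2 * M ^ 2 / 4 := by
      rw [hρdef]; ring
    nlinarith [mul_le_mul_of_nonneg_left hlim hW,
      mul_le_mul_of_nonneg_right hIK (by positivity : (0:ℝ) ≤ Real.pi * m * (1 - δ) ^ 2)]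
  have hne1 : Real.pi ≠ 0 := hπ.ne'
  have hne2 : m ≠ 0 := hm.ne'
  have hne3 : (1 : ℝ) - δ ≠ 0 := by intro h; linarith [h]
  have hkey : (1 + 4 * ((1 / Real.pi) * W) / (m * (1 - δ) ^ 2)) * ((1 / Real.pi) * IA)
      - (1 / Real.pi) * (IK + IA)
      = (4 * W * IA - IK * (Real.pi * m * (1 - δ) ^ 2)) / (Real.pi ^ 2 * m * (1 - δ) ^ 2) := by
    field_simp
    ring
  have h9 : 0 ≤ (4 * W * IA - IK * (Real.pi * m * (1 - δ) ^ 2))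
      / (Real.pi ^ 2 * m * (1 - δ) ^ 2) :=
    div_nonneg (by linarith) (by positivity)
  linarith [hkey ▸ h9]
end

section
/- Let (αₙₖ)_{k>n≥0} and (αₙₙ)_{n≥0} be complex numbers and suppose there exist constants C, C' > 0 and λ ≥ 0 such that 1/|αₙₙ| ≤ C'/√n and |αₙₖ| ≤ C/k^λ for all k > n ≥ 0 (n ≥ 1 for the first bound). Define recursively h(n,0) = 1, g(n,0,k) = -αₙₖ for k > n, h(n,m+1) = g(n,m,n+m+1)/α_{n+m+1,n+m+1}, and g(n,m+1,k) = g(n,m,k) - h(n,m+1)α_{n+m+1,k} for k ≥ n+m+2. Then for all m ≥ 0 and k ≥ n+m+1, |g(n,m,k)| ≤ (C/k^λ) ∏_{ℓ=1}^{m} (1 + CC'/(n+ℓ)^{λ+1/2}), and for all j ≥ 1, |h(n,j)| ≤ (CC'/(n+j)^{λ+1/2}) ∏_{ℓ=1}^{j-1} (1 + CC'/(n+ℓ)^{λ+1/2}). -/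
open Complex

theorem stmt13 (α : ℕ → ℕ → ℂ) (C C' lam : ℝ) (hC : 0 < C) (hC' : 0 < C') (hlam : 0 ≤ lam)
    (hαnn : ∀ n : ℕ, 1 ≤ n → 1 / ‖α n n‖ ≤ C' / Real.sqrt n)
    (hαnk : ∀ n k : ℕ, n < k → ‖α n k‖ ≤ C / (k : ℝ) ^ lam)
    (h : ℕ → ℕ → ℂ) (g : ℕ → ℕ → ℕ → ℂ)
    (hh0 : ∀ n, h n 0 = 1)
    (hg0 : ∀ n k, n < k → g n 0 k = -α n k)
    (hhrec : ∀ n m, h n (m + 1) = g n m (n + m + 1) / α (n + m + 1) (n + m + 1))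
    (hgrec : ∀ n m k, n + m + 2 ≤ k →
      g n (m + 1) k = g n m k - h n (m + 1) * α (n + m + 1) k) :
    (∀ n m k : ℕ, n + m + 1 ≤ k →
      ‖g n m k‖ ≤ (C / (k : ℝ) ^ lam) *
        ∏ ℓ ∈ Finset.Icc 1 m, (1 + C * C' / ((n : ℝ) + ℓ) ^ (lam + 1 / 2))) ∧
    (∀ n j : ℕ, 1 ≤ j →
      ‖h n j‖ ≤ (C * C' / ((n : ℝ) + j) ^ (lam + 1 / 2)) *
        ∏ ℓ ∈ Finset.Icc 1 (j - 1), (1 + C * C' / ((n : ℝ) + ℓ) ^ (lam + 1 / 2))) := by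
  have hPpos : ∀ (n m : ℕ), (0:ℝ) <
      ∏ ℓ ∈ Finset.Icc 1 m, (1 + C * C' / ((n : ℝ) + ℓ) ^ (lam + 1 / 2)) := by
    intro n m
    apply Finset.prod_pos
    intro ℓ hℓ
    have h1 : (0:ℝ) ≤ C * C' / ((n : ℝ) + ℓ) ^ (lam + 1 / 2) := by positivity
    linarith
  -- derive the h-bound at level m+1 from the g-bound at level m
  have hHstep : ∀ (m : ℕ),
      (∀ n k, n + m + 1 ≤ k → ‖g n m k‖ ≤ C / (k:ℝ)^lam *
          ∏ ℓ ∈ Finset.Icc 1 m, (1 + C * C' / ((n:ℝ)+ℓ)^(lam+1/2))) →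
      ∀ n : ℕ, ‖h n (m+1)‖ ≤
        C * C' / ((n:ℝ) + ((m+1 : ℕ) : ℝ)) ^ (lam + 1/2) *
          ∏ ℓ ∈ Finset.Icc 1 m, (1 + C * C' / ((n:ℝ)+ℓ)^(lam+1/2)) := by
    intro m IH n
    have hg := IH n (n+m+1) le_rfl
    have hα := hαnn (n+m+1) (by omega)
    have hx0 : (0:ℝ) < ((n+m+1 : ℕ) : ℝ) := by positivity
    have key : ‖g n m (n+m+1)‖ / ‖α (n+m+1) (n+m+1)‖ ≤
        (C / ((n+m+1:ℕ):ℝ)^lam *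
          ∏ ℓ ∈ Finset.Icc 1 m, (1 + C * C' / ((n:ℝ)+ℓ)^(lam+1/2))) *
          (C' / Real.sqrt ((n+m+1:ℕ):ℝ)) := by
      rw [div_eq_mul_inv, ← one_div]
      exact mul_le_mul hg hα (by positivity)
        (mul_nonneg (by positivity) (hPpos n m).le)
    calc ‖h n (m+1)‖
        = ‖g n m (n+m+1)‖ / ‖α (n+m+1) (n+m+1)‖ := by
          rw [hhrec, norm_div]
      _ ≤ (C / ((n+m+1:ℕ):ℝ)^lam *
          ∏ ℓ ∈ Finset.Icc 1 m, (1 + C * C' / ((n:ℝ)+ℓ)^(lam+1/2))) *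
          (C' / Real.sqrt ((n+m+1:ℕ):ℝ)) := key
      _ = C * C' / ((n:ℝ) + ((m+1 : ℕ) : ℝ)) ^ (lam + 1/2) *
          ∏ ℓ ∈ Finset.Icc 1 m, (1 + C * C' / ((n:ℝ)+ℓ)^(lam+1/2)) := by
          rw [show ((n:ℝ) + ((m+1 : ℕ) : ℝ)) = ((n+m+1:ℕ):ℝ) by push_cast; ring]
          rw [Real.sqrt_eq_rpow, Real.rpow_add hx0]
          ring
  have key : ∀ (m n k : ℕ), n + m + 1 ≤ k →
      ‖g n m k‖ ≤ C / (k:ℝ)^lam *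
        ∏ ℓ ∈ Finset.Icc 1 m, (1 + C * C' / ((n:ℝ)+ℓ)^(lam+1/2)) := by
    intro m
    induction m with
    | zero =>
      intro n k hk
      rw [hg0 n k (by omega), norm_neg, show Finset.Icc 1 0 = (∅ : Finset ℕ) from
        Finset.Icc_eq_empty (by omega), Finset.prod_empty, mul_one]
      exact hαnk n k (by omega)
    | succ m IH =>
      intro n k hk
      have hH := hHstep m IH n
      have hg := IH n k (by omega)
      have hαb := hαnk (n+m+1) k (by omega)
      have hA : (0:ℝ) ≤ C / (k:ℝ)^lam := by positivity
      have hB : (0:ℝ) ≤ C * C' / ((n:ℝ) + ((m+1 : ℕ) : ℝ)) ^ (lam + 1/2) := by positivity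
      have tri : ‖g n m k - h n (m+1) * α (n+m+1) k‖ ≤
          ‖g n m k‖ + ‖h n (m+1) * α (n+m+1) k‖ := by
        simpa [sub_eq_add_neg, norm_neg] using
          norm_add_le (g n m k) (-(h n (m+1) * α (n+m+1) k))
      have hmul : ‖h n (m+1) * α (n+m+1) k‖ ≤
          (C * C' / ((n:ℝ) + ((m+1 : ℕ) : ℝ)) ^ (lam + 1/2) *
            ∏ ℓ ∈ Finset.Icc 1 m, (1 + C * C' / ((n:ℝ)+ℓ)^(lam+1/2))) *
          (C / (k:ℝ)^lam) := by
        rw [norm_mul]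
        exact mul_le_mul hH hαb (norm_nonneg _)
          (mul_nonneg hB (hPpos n m).le)
      rw [hgrec n m k (by omega)]
      have hprod : ∏ ℓ ∈ Finset.Icc 1 (m+1), (1 + C * C' / ((n:ℝ)+ℓ)^(lam+1/2)) =
          (∏ ℓ ∈ Finset.Icc 1 m, (1 + C * C' / ((n:ℝ)+ℓ)^(lam+1/2))) *
          (1 + C * C' / ((n:ℝ) + ((m+1 : ℕ) : ℝ)) ^ (lam + 1/2)) := by
        rw [Finset.prod_Icc_succ_top (by omega : 1 ≤ m + 1)]
      rw [hprod]
      have heq : C / (k:ℝ)^lam *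
          ((∏ ℓ ∈ Finset.Icc 1 m, (1 + C * C' / ((n:ℝ)+ℓ)^(lam+1/2))) *
          (1 + C * C' / ((n:ℝ) + ((m+1 : ℕ) : ℝ)) ^ (lam + 1/2))) =
          C / (k:ℝ)^lam * (∏ ℓ ∈ Finset.Icc 1 m, (1 + C * C' / ((n:ℝ)+ℓ)^(lam+1/2))) +
          (C * C' / ((n:ℝ) + ((m+1 : ℕ) : ℝ)) ^ (lam + 1/2) *
            ∏ ℓ ∈ Finset.Icc 1 m, (1 + C * C' / ((n:ℝ)+ℓ)^(lam+1/2))) *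
          (C / (k:ℝ)^lam) := by ring
      rw [heq]
      linarith
  refine ⟨fun n m k hk => key m n k hk, fun n j hj => ?_⟩
  obtain ⟨m, rfl⟩ : ∃ m, j = m + 1 := ⟨j - 1, by omega⟩
  simpa using hHstep m (key m) n
end

section
/- Let h(n,j) be complex numbers with h(n,0) = 1 and |h(n,j)| ≤ (CC'/(n+j)^{λ+1/2}) ∏_{ℓ=1}^{j-1}(1 + CC'/(n+ℓ)^{λ+1/2}) for j ≥ 1, where C, C' > 0, λ ≥ 0. Define Hₙ(z) = Σ_{j=1}^∞ h(n,j) zʲ. Then Hₙ is well-defined and holomorphic on the open unit disk, Hₙ(0) = 0, and for every 0 < r < 1 there is a constant K (depending on r, C, C', λ) such that |Hₙ(z)| ≤ K n^{-λ-1/2} for all |z| ≤ r and all n ≥ 1. -/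
open Complex Metric Filter

private noncomputable def Qfac (D : ℝ) (j : ℕ) : ℝ :=
  ∏ ℓ ∈ Finset.Icc 1 (j - 1), (1 + D / (ℓ : ℝ) ^ ((1 : ℝ) / 2))

private lemma Qfac_nonneg {D : ℝ} (hD : 0 ≤ D) (j : ℕ) : 0 ≤ Qfac D j := by
  apply Finset.prod_nonneg
  intro ℓ _
  have : 0 ≤ D / (ℓ : ℝ) ^ ((1 : ℝ) / 2) :=
    div_nonneg hD (Real.rpow_nonneg (by positivity) _)
  linarith

private lemma Qfac_summable {D : ℝ} (hD : 0 < D) {r : ℝ} (hr0 : 0 ≤ r) (hr1 : r < 1) :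
    Summable (fun j : ℕ => Qfac D (j + 1) * r ^ (j + 1)) := by
  rcases eq_or_lt_of_le hr0 with h0 | h0
  · simpa [← h0] using summable_zero
  set r' := (1 + r) / 2 with hr'
  have hr'1 : r' < 1 := by rw [hr']; linarith
  apply summable_of_ratio_norm_eventually_le hr'1
  have htend : Tendsto (fun j : ℕ => D / ((j : ℝ) + 1) ^ ((1 : ℝ) / 2)) atTop (nhds 0) := by
    apply Tendsto.div_atTop tendsto_const_nhds
    exact (tendsto_rpow_atTop (by norm_num : (0:ℝ) < 1/2)).comp
      (tendsto_atTop_add_const_right atTop 1 tendsto_natCast_atTop_atTop)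
  have hc : (0:ℝ) < (1 - r) / (2 * r) := div_pos (by linarith) (by linarith)
  have hev : ∀ᶠ j : ℕ in atTop, D / ((j : ℝ) + 1) ^ ((1 : ℝ) / 2) ≤ (1 - r) / (2 * r) :=
    htend.eventually_le_const hc
  filter_upwards [hev] with j hj
  set t := D / ((j : ℝ) + 1) ^ ((1 : ℝ) / 2) with ht
  have ht0 : 0 ≤ t := div_nonneg hD.le (Real.rpow_nonneg (by positivity) _)
  have hQ : Qfac D (j + 2) = Qfac D (j + 1) * (1 + t) := by
    have e1 : Qfac D (j + 2) = ∏ ℓ ∈ Finset.Icc 1 (j + 1), (1 + D / (ℓ : ℝ) ^ ((1 : ℝ) / 2)) :=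
      rfl
    rw [e1, Finset.prod_Icc_succ_top (Nat.le_add_left 1 j)]
    simp only [Qfac, Nat.add_sub_cancel, ht]
    push_cast
    ring
  have hQ0 : 0 ≤ Qfac D (j + 1) := Qfac_nonneg hD.le _
  have hQ0' : 0 ≤ Qfac D (j + 2) := Qfac_nonneg hD.le _
  have hrp : 0 ≤ r ^ (j + 1) := pow_nonneg hr0 _
  have hrp' : 0 ≤ r ^ (j + 1 + 1) := pow_nonneg hr0 _
  rw [Real.norm_of_nonneg (mul_nonneg hQ0' hrp'), Real.norm_of_nonneg (mul_nonneg hQ0 hrp)]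
  have key : (1 + t) * r ≤ r' := by
    have h1 : t * r ≤ (1 - r) / (2 * r) * r := mul_le_mul_of_nonneg_right hj hr0
    have h2 : (1 - r) / (2 * r) * r = (1 - r) / 2 := by field_simp
    rw [hr']
    nlinarith
  calc Qfac D (j + 1 + 1) * r ^ (j + 1 + 1)
      = (Qfac D (j + 1) * r ^ (j + 1)) * ((1 + t) * r) := by rw [hQ]; ring
    _ ≤ (Qfac D (j + 1) * r ^ (j + 1)) * r' :=
        mul_le_mul_of_nonneg_left key (mul_nonneg hQ0 hrp)
    _ = r' * (Qfac D (j + 1) * r ^ (j + 1)) := by ring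

theorem stmt15 (C C' lam : ℝ) (hC : 0 < C) (hC' : 0 < C') (hlam : 0 ≤ lam)
    (h : ℕ → ℕ → ℂ) (hh0 : ∀ n, h n 0 = 1)
    (hhb : ∀ n j : ℕ, 1 ≤ j →
      ‖h n j‖ ≤ (C * C' / ((n : ℝ) + j) ^ (lam + 1 / 2)) *
        ∏ ℓ ∈ Finset.Icc 1 (j - 1), (1 + C * C' / ((n : ℝ) + ℓ) ^ (lam + 1 / 2)))
    (H : ℕ → ℂ → ℂ)
    (hH : ∀ (n : ℕ) (z : ℂ), H n z = ∑' j : ℕ, h n (j + 1) * z ^ (j + 1)) :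
    (∀ n : ℕ, 1 ≤ n → ∀ z ∈ ball (0:ℂ) 1,
        Summable (fun j : ℕ => h n (j + 1) * z ^ (j + 1))) ∧
    (∀ n : ℕ, 1 ≤ n → DifferentiableOn ℂ (H n) (ball (0:ℂ) 1)) ∧
    (∀ n : ℕ, H n 0 = 0) ∧
    (∀ r : ℝ, 0 < r → r < 1 → ∃ K : ℝ, ∀ n : ℕ, 1 ≤ n → ∀ z : ℂ, ‖z‖ ≤ r →
      ‖H n z‖ ≤ K * (n : ℝ) ^ (-(lam + 1 / 2))) := by
  set D : ℝ := C * C' with hD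
  have hD0 : 0 < D := mul_pos hC hC'
  set a : ℝ := lam + 1 / 2 with ha
  have ha0 : 0 < a := by rw [ha]; linarith
  -- Key pointwise bound
  have key : ∀ n j : ℕ, 1 ≤ n → 1 ≤ j →
      ‖h n j‖ ≤ D * (n : ℝ) ^ (-a) * Qfac D j := by
    intro n j hn hj
    have hn1 : (1 : ℝ) ≤ (n : ℝ) := by exact_mod_cast hn
    have hna : 0 < (n : ℝ) ^ a := Real.rpow_pos_of_pos (by linarith) a
    have h1 : D / ((n : ℝ) + j) ^ a ≤ D * (n : ℝ) ^ (-a) := by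
      have hle : (n : ℝ) ^ a ≤ ((n : ℝ) + j) ^ a :=
        Real.rpow_le_rpow (by linarith) (by linarith [Nat.cast_nonneg (α := ℝ) j]) ha0.le
      have h2 : D / ((n : ℝ) + j) ^ a ≤ D / (n : ℝ) ^ a :=
        div_le_div_of_nonneg_left hD0.le hna hle
      have h3 : D / (n : ℝ) ^ a = D * (n : ℝ) ^ (-a) := by
        rw [Real.rpow_neg (by linarith : (0:ℝ) ≤ (n:ℝ)), div_eq_mul_inv]
      linarith [h2, h3.symm.le]
    have h2 : ∏ ℓ ∈ Finset.Icc 1 (j - 1), (1 + D / ((n : ℝ) + ℓ) ^ a) ≤ Qfac D j := by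
      apply Finset.prod_le_prod
      · intro ℓ _
        have : 0 ≤ D / ((n : ℝ) + ℓ) ^ a := by positivity
        linarith
      · intro ℓ hℓ
        simp only [Finset.mem_Icc] at hℓ
        have hℓ1 : (1 : ℝ) ≤ (ℓ : ℝ) := by exact_mod_cast hℓ.1
        have hle : (ℓ : ℝ) ^ ((1 : ℝ) / 2) ≤ ((n : ℝ) + ℓ) ^ a := by
          calc (ℓ : ℝ) ^ ((1 : ℝ) / 2) ≤ ((n : ℝ) + ℓ) ^ ((1 : ℝ) / 2) :=
                Real.rpow_le_rpow (by linarith) (by linarith) (by norm_num)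
            _ ≤ ((n : ℝ) + ℓ) ^ a :=
                Real.rpow_le_rpow_of_exponent_le (by linarith) (by rw [ha]; linarith)
        have hℓp : (0 : ℝ) < (ℓ : ℝ) ^ ((1 : ℝ) / 2) := Real.rpow_pos_of_pos (by linarith) _
        have := div_le_div_of_nonneg_left hD0.le hℓp hle
        linarith
    calc ‖h n j‖
        ≤ (D / ((n : ℝ) + j) ^ a) *
          ∏ ℓ ∈ Finset.Icc 1 (j - 1), (1 + D / ((n : ℝ) + ℓ) ^ a) := hhb n j hj
      _ ≤ (D * (n : ℝ) ^ (-a)) * Qfac D j := by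
          apply mul_le_mul h1 h2 (Finset.prod_nonneg fun ℓ _ => by positivity) (by positivity)
  -- norm bound of terms
  have termbd : ∀ n : ℕ, 1 ≤ n → ∀ z : ℂ, ∀ j : ℕ,
      ‖h n (j + 1) * z ^ (j + 1)‖ ≤
        D * (n : ℝ) ^ (-a) * Qfac D (j + 1) * (‖z‖) ^ (j + 1) := by
    intro n hn z j
    rw [norm_mul, norm_pow]
    have h1 := key n (j + 1) hn (Nat.le_add_left 1 j)
    have h2 : (0 : ℝ) ≤ (‖z‖) ^ (j + 1) := by positivity
    calc ‖h n (j + 1)‖ * ‖z‖ ^ (j + 1)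
        ≤ (D * (n : ℝ) ^ (-a) * Qfac D (j + 1)) * (‖z‖) ^ (j + 1) := by
          apply mul_le_mul_of_nonneg_right h1 h2
      _ = _ := by ring
  have majsum : ∀ n : ℕ, ∀ s : ℝ, 0 ≤ s → s < 1 →
      Summable (fun j : ℕ => D * (n : ℝ) ^ (-a) * Qfac D (j + 1) * s ^ (j + 1)) := by
    intro n s hs0 hs1
    have := (Qfac_summable hD0 hs0 hs1).mul_left (D * (n : ℝ) ^ (-a))
    apply this.congr
    intro j; ring
  have hsum : ∀ n : ℕ, 1 ≤ n → ∀ z : ℂ, ‖z‖ < 1 →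
      Summable (fun j : ℕ => h n (j + 1) * z ^ (j + 1)) := by
    intro n hn z hz
    exact Summable.of_norm_bounded (majsum n (‖z‖) (norm_nonneg z) hz)
      (termbd n hn z)
  refine ⟨fun n hn z hz => hsum n hn z (by simpa [Complex.dist_eq] using hz), ?_, ?_, ?_⟩
  · -- differentiability
    intro n hn
    intro x hx
    simp only [mem_ball, Complex.dist_eq, sub_zero] at hx
    set s : ℝ := (‖x‖ + 1) / 2 with hs
    have hs0 : 0 ≤ s := by positivity
    have hs1 : s < 1 := by rw [hs]; linarith
    have hxs : ‖x‖ < s := by rw [hs]; linarith [norm_nonneg x]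
    have hdiff : DifferentiableOn ℂ (fun w => ∑' j : ℕ, h n (j + 1) * w ^ (j + 1))
        (ball (0 : ℂ) s) := by
      apply differentiableOn_tsum_of_summable_norm (majsum n s hs0 hs1)
      · intro j
        exact (differentiable_const _ |>.mul (differentiable_pow _)).differentiableOn
      · exact isOpen_ball
      · intro j w hw
        simp only [mem_ball, Complex.dist_eq, sub_zero] at hw
        calc ‖h n (j + 1) * w ^ (j + 1)‖
            ≤ D * (n : ℝ) ^ (-a) * Qfac D (j + 1) * (‖w‖) ^ (j + 1) :=
              termbd n hn w j
          _ ≤ D * (n : ℝ) ^ (-a) * Qfac D (j + 1) * s ^ (j + 1) := by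
              apply mul_le_mul_of_nonneg_left
                (pow_le_pow_left₀ (norm_nonneg w) hw.le _)
                (mul_nonneg (by positivity) (Qfac_nonneg hD0.le _))
    have hHeq : DifferentiableOn ℂ (H n) (ball (0 : ℂ) s) := by
      apply hdiff.congr
      intro w _
      exact hH n w
    have hxmem : x ∈ ball (0 : ℂ) s := by
      simp [mem_ball, Complex.dist_eq, hxs]
    exact ((hHeq.differentiableAt (isOpen_ball.mem_nhds hxmem)).differentiableWithinAt)
  · -- H n 0 = 0
    intro n
    rw [hH n 0]
    simp
  · -- uniform bound
    intro r hr0 hr1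
    refine ⟨D * ∑' j : ℕ, Qfac D (j + 1) * r ^ (j + 1), ?_⟩
    intro n hn z hz
    have hz1 : ‖z‖ < 1 := lt_of_le_of_lt hz hr1
    have hQs : Summable (fun j : ℕ => Qfac D (j + 1) * r ^ (j + 1)) :=
      Qfac_summable hD0 hr0.le hr1
    have hmaj := majsum n r hr0.le hr1
    have hle2 : ∀ j : ℕ, ‖h n (j + 1) * z ^ (j + 1)‖ ≤
        D * (n : ℝ) ^ (-a) * Qfac D (j + 1) * r ^ (j + 1) := by
      intro j
      calc ‖h n (j + 1) * z ^ (j + 1)‖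
          ≤ D * (n : ℝ) ^ (-a) * Qfac D (j + 1) * (‖z‖) ^ (j + 1) := termbd n hn z j
        _ ≤ D * (n : ℝ) ^ (-a) * Qfac D (j + 1) * r ^ (j + 1) := by
            apply mul_le_mul_of_nonneg_left (pow_le_pow_left₀ (norm_nonneg z) hz _)
              (mul_nonneg (by positivity) (Qfac_nonneg hD0.le _))
    have hnorms : Summable (fun j : ℕ => ‖h n (j + 1) * z ^ (j + 1)‖) :=
      Summable.of_nonneg_of_le (fun j => norm_nonneg _) hle2 hmaj
    rw [hH n z]
    calc ‖∑' j : ℕ, h n (j + 1) * z ^ (j + 1)‖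
        ≤ ∑' j : ℕ, ‖h n (j + 1) * z ^ (j + 1)‖ := norm_tsum_le_tsum_norm hnorms
      _ ≤ ∑' j : ℕ, D * (n : ℝ) ^ (-a) * Qfac D (j + 1) * r ^ (j + 1) :=
          Summable.tsum_le_tsum hle2 hnorms hmaj
      _ = (D * (n : ℝ) ^ (-a)) * ∑' j : ℕ, Qfac D (j + 1) * r ^ (j + 1) := by
          rw [← tsum_mul_left]
          congr 1; funext j; ring
      _ = (D * ∑' j : ℕ, Qfac D (j + 1) * r ^ (j + 1)) * (n : ℝ) ^ (-a) := by ring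
end
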